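/- Let I be a finite type with a distinguished element e and an involution j ↦ j∨ on I fixing e. Let S be a symmetric I-by-I matrix over ℂ, set dim j := S e j, and assume dim j ≠ 0 for all j, dim e = 1, and dim (j∨) = dim j for all j. Suppose the fusion coefficients N : I → I → I → ℂ satisfy the Verlinde formula S i k * S j k = dim k * ∑_p N i j p * S p k for all i, j, k, and that N i j e = 1 if j = i∨ and N i j e = 0 otherwise. If d̂ : I → ℂ satisfies ∑_j d̂ j * S j i = (1 if i = e else 0) for all i, then for every i ∈ I: ∑_j dim j * S j i = (1 / d̂ e) * (1 if i = e else 0). -/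
import Mathlib


open Matrix BigOperators

/-- Implication 3) ⇒ 2): `∑_j dim(j) S_{j,i} = d̂(e)⁻¹ δ_{i,e}`. -/
theorem stmt_5 {I : Type*} [Fintype I] [DecidableEq I]
    (e : I) (v : I → I) (hv : Function.Involutive v) (hve : v e = e)
    (S : Matrix I I ℂ) (hS : S.IsSymm)
    (hdim : ∀ j, S e j ≠ 0) (hde : S e e = 1)
    (hdual : ∀ j, S e (v j) = S e j)
    (N : I → I → I → ℂ)
    (hVer : ∀ i j k, S i k * S j k = S e k * ∑ p, N i j p * S p k)
    (hNe : ∀ i j, N i j e = if j = v i then 1 else 0)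
    (dhat : I → ℂ)
    (hd : ∀ i, ∑ j, dhat j * S j i = if i = e then 1 else 0) :
    ∀ i, ∑ j, S e j * S j i = (1 / dhat e) * (if i = e then 1 else 0) := by
  set Y : Matrix I I ℂ := Matrix.diagonal (fun j => dhat j / S e j) with hY
  set C : Matrix I I ℂ := Matrix.of (fun a b => if b = v a then (1:ℂ) else 0) with hC
  have hSapp : ∀ a b, S a b = S b a := fun a b => (hS.apply b a)
  -- Key identity: S * Y * S = C
  have hSYS : S * Y * S = C := by
    ext a b
    rw [Matrix.mul_apply]
    have hkey : ∀ k, (S * Y) a k * S k b = dhat k * ∑ p, N a b p * S p k := by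
      intro k
      rw [Matrix.mul_diagonal]
      have hv1 : S a k * S k b = S e k * ∑ p, N a b p * S p k := by
        rw [hSapp k b]; exact hVer a b k
      calc S a k * (dhat k / S e k) * S k b
          = (dhat k / S e k) * (S a k * S k b) := by ring
        _ = (dhat k / S e k) * (S e k * ∑ p, N a b p * S p k) := by rw [hv1]
        _ = dhat k * ∑ p, N a b p * S p k := by
            rw [← mul_assoc, div_mul_cancel₀ _ (hdim k)]
    simp_rw [hkey, Finset.mul_sum]
    calc ∑ k, ∑ p, dhat k * (N a b p * S p k)
        = ∑ p, ∑ k, dhat k * (N a b p * S p k) := Finset.sum_comm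
      _ = ∑ p, N a b p * ∑ k, dhat k * S k p := by
          congr 1; ext p
          rw [Finset.mul_sum]
          congr 1; ext k
          rw [hSapp p k]; ring
      _ = ∑ p, N a b p * (if p = e then 1 else 0) := by simp_rw [hd]
      _ = N a b e := by simp
      _ = C a b := by rw [hNe]; rfl
  -- C * C = 1
  have hCC : C * C = 1 := by
    ext a b
    rw [Matrix.mul_apply]
    simp only [hC, Matrix.of_apply]
    rw [Finset.sum_eq_single (v a)]
    · simp [hv a, Matrix.one_apply, eq_comm]
    · intro k _ hk
      simp [hC, hk]
    · simp
  -- S * (Y * S * C) = 1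
  have h1 : S * (Y * S * C) = 1 := by
    calc S * (Y * S * C) = (S * Y * S) * C := by noncomm_ring
      _ = C * C := by rw [hSYS]
      _ = 1 := hCC
  have h2 : (Y * S * C) * S = 1 := mul_eq_one_comm.mp h1
  have hYSCS : Y * (S * C * S) = 1 := by
    calc Y * (S * C * S) = (Y * S * C) * S := by noncomm_ring
      _ = 1 := h2
  -- Row e of Y * (S*C*S)
  have hrow : ∀ i, dhat e * (S * C * S) e i = if e = i then 1 else 0 := by
    intro i
    have := congrFun (congrFun hYSCS e) i
    rw [Matrix.mul_apply] at this
    rw [Finset.sum_eq_single e] at this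
    · rw [hY, Matrix.diagonal_apply_eq, hde, div_one] at this
      rw [this, Matrix.one_apply]
    · intro k _ hk
      rw [hY, Matrix.diagonal_apply_ne _ (Ne.symm hk), zero_mul]
    · simp
  have hdhat : dhat e ≠ 0 := by
    intro h
    have := hrow e
    rw [h, zero_mul, if_pos rfl] at this
    exact zero_ne_one this
  -- (S*C*S) e i = ∑_j S e j * S j i
  have hSCS : ∀ i, (S * C * S) e i = ∑ j, S e j * S j i := by
    intro i
    rw [Matrix.mul_apply]
    congr 1; ext j
    congr 1
    rw [Matrix.mul_apply]
    rw [Finset.sum_eq_single (v j)]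
    · simp [hC, hv j, hdual]
    · intro k _ hk
      have : ¬ (j = v k) := fun h => hk (by rw [h, hv])
      simp [hC, this]
    · simp
  intro i
  have := hrow i
  rw [hSCS i] at this
  field_simp
  rw [mul_comm, this]
  simp [eq_comm]
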